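/- Let n ≥ 4. For every choice of (n−2)·n rows I of the Alexander matrix M_{n−1}, the polynomial (1 − z)^{n−2}·(1 − t z²) divides det M_{n−1}^I in ℤ[t,z]. -/

import Mathlib

open Matrix MvPolynomial

/-- The polynomial ring ℤ[t,z] in two commuting variables. -/
noncomputable abbrev Rtz : Type := MvPolynomial (Fin 2) ℤ

/-- The variable `t` of ℤ[t,z]. -/
noncomputable def tv : Rtz := MvPolynomial.X 0

/-- The variable `z` of ℤ[t,z]. -/
noncomputable def zv : Rtz := MvPolynomial.X 1

/-- The Tong–Yang–Ma matrix ρ_i (1-based `i`, `1 ≤ i ≤ n-1`): the identity matrix except for a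
2×2 block `[[0,1],[t,0]]` occupying rows and columns `i-1` and `i` (0-based indexing), i.e.
rows and columns `i` and `i+1` in 1-based indexing. -/
noncomputable def tymρ (n : ℕ) (i : ℕ) : Matrix (Fin n) (Fin n) Rtz :=
  Matrix.of fun p q =>
    if (p : ℕ) + 1 = i ∧ (q : ℕ) = i then 1
    else if (p : ℕ) = i ∧ (q : ℕ) + 1 = i then tv
    else if (p : ℕ) = (q : ℕ) ∧ (p : ℕ) + 1 ≠ i ∧ (p : ℕ) ≠ i then 1
    else 0

/-- The `n × n` block of the Alexander matrix of the Artin presentation of `B_n` associated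
with the Tong–Yang–Ma representation, in the row-block of the relation `[i,j]`
(`1 ≤ i < j ≤ n-1`, 1-based) and the column-block `c` (`1 ≤ c ≤ n-2`, 1-based). -/
noncomputable def alexBlock (n : ℕ) (i j c : ℕ) : Matrix (Fin n) (Fin n) Rtz :=
  if j = i + 1 then
    if c = i then 1 - zv • tymρ n (i + 1) + zv ^ 2 • (tymρ n i * tymρ n (i + 1))
    else if c = i + 1 then zv • tymρ n i - zv ^ 2 • (tymρ n (i + 1) * tymρ n i) - 1
    else 0
  else
    if c = i then 1 - zv • tymρ n j
    else if c = j then zv • tymρ n i - 1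
    else 0

/-- The row index set of the Alexander matrix `M_{n-1}`: a pair of a relation `[i,j]`
(`1 ≤ i < j ≤ n-1`, recorded 0-based as elements of `Fin (n-1)`) and a row `Fin n`
within the corresponding row-block. -/
def AlexRow (n : ℕ) : Type := {p : Fin (n - 1) × Fin (n - 1) // p.1 < p.2} × Fin n

/-- The Alexander matrix `M_{n-1}` of the Artin presentation of the braid group `B_n`
associated with the Tong–Yang–Ma representation `σ_i ↦ ρ_i` and the abelianization
`σ_i ↦ z`, with the column-block corresponding to the generator `σ_{n-1}` removed.
Columns are indexed by pairs (column-block `Fin (n-2)` (0-based), column `Fin n` within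
the block). -/
noncomputable def alexM (n : ℕ) : Matrix (AlexRow n) (Fin (n - 2) × Fin n) Rtz :=
  fun r c => alexBlock n ((r.1.1.1 : ℕ) + 1) ((r.1.1.2 : ℕ) + 1) ((c.1 : ℕ) + 1) r.2 c.2


/-! Auxiliary -/

noncomputable def vNat (n : ℕ) (F : ℕ → Rtz) : Fin n → Rtz := fun q => F (q : ℕ)

noncomputable def rhoF (m : ℕ) (F : ℕ → Rtz) : ℕ → Rtz :=
  fun p => if p + 1 = m then F m else if p = m then tv * F (m - 1) else F p

lemma tymρ_mulVec (n m : ℕ) (h1 : 1 ≤ m) (h2 : m ≤ n - 1) (hn : 2 ≤ n) (F : ℕ → Rtz) :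
    tymρ n m *ᵥ vNat n F = vNat n (rhoF m F) := by
  funext p
  have hmn : m < n := by omega
  show ∑ q : Fin n, tymρ n m p q * vNat n F q = _
  simp only [tymρ, Matrix.of_apply, vNat, rhoF]
  rcases eq_or_ne ((p : ℕ) + 1) m with hp | hp
  · rw [Finset.sum_eq_single (⟨m, hmn⟩ : Fin n), if_pos hp]
    · have : ((⟨m, hmn⟩ : Fin n) : ℕ) = m := rfl
      rw [this]
      split_ifs <;> (first | ring1 | (exfalso; omega))
    · intro q _ hq
      have hq' : (q : ℕ) ≠ m := fun h => hq (Fin.ext h)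
      split_ifs <;> (first | ring1 | (exfalso; omega))
    · intro h; exact absurd (Finset.mem_univ _) h
  · rcases eq_or_ne ((p : ℕ)) m with hp2 | hp2
    · rw [Finset.sum_eq_single (⟨m - 1, by omega⟩ : Fin n), if_neg hp, if_pos hp2]
      · have : ((⟨m - 1, by omega⟩ : Fin n) : ℕ) = m - 1 := rfl
        rw [this]
        split_ifs <;> (first | ring1 | (exfalso; omega))
      · intro q _ hq
        have hq' : (q : ℕ) ≠ m - 1 := fun h => hq (Fin.ext h)
        split_ifs <;> (first | ring1 | (exfalso; omega))
      · intro h; exact absurd (Finset.mem_univ _) h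
    · rw [Finset.sum_eq_single p, if_neg hp, if_neg hp2]
      · split_ifs <;> (first | ring1 | (exfalso; omega))
      · intro q _ hq
        have hq' : (q : ℕ) ≠ (p : ℕ) := fun h => hq (Fin.ext h)
        split_ifs <;> (first | ring1 | (exfalso; omega))
      · intro h; exact absurd (Finset.mem_univ _) h

lemma smul_vNat (n : ℕ) (c : Rtz) (F : ℕ → Rtz) : c • vNat n F = vNat n (fun p => c * F p) := rfl

lemma braid_col_i_mulVec (n i : ℕ) (h1 : 1 ≤ i) (h2 : i + 1 ≤ n - 1) (hn : 2 ≤ n) (F : ℕ → Rtz) :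
    alexBlock n i (i + 1) i *ᵥ vNat n F
      = vNat n (fun p => F p - zv * rhoF (i + 1) F p + zv ^ 2 * rhoF i (rhoF (i + 1) F) p) := by
  have hb : alexBlock n i (i + 1) i
      = 1 - zv • tymρ n (i + 1) + zv ^ 2 • (tymρ n i * tymρ n (i + 1)) := by
    unfold alexBlock; rw [if_pos rfl, if_pos rfl]
  rw [hb, Matrix.add_mulVec, Matrix.sub_mulVec, Matrix.one_mulVec, Matrix.smul_mulVec,
    Matrix.smul_mulVec, ← Matrix.mulVec_mulVec, tymρ_mulVec n (i+1) (by omega) h2 hn,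
    tymρ_mulVec n i h1 (by omega) hn, smul_vNat, smul_vNat]
  rfl

lemma braid_col_j_mulVec (n i : ℕ) (h1 : 1 ≤ i) (h2 : i + 1 ≤ n - 1) (hn : 2 ≤ n) (F : ℕ → Rtz) :
    alexBlock n i (i + 1) (i + 1) *ᵥ vNat n F
      = vNat n (fun p => zv * rhoF i F p - zv ^ 2 * rhoF (i + 1) (rhoF i F) p - F p) := by
  have hb : alexBlock n i (i + 1) (i + 1)
      = zv • tymρ n i - zv ^ 2 • (tymρ n (i + 1) * tymρ n i) - 1 := by
    unfold alexBlock; rw [if_pos rfl, if_neg (by omega), if_pos rfl]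
  rw [hb, Matrix.sub_mulVec, Matrix.sub_mulVec, Matrix.one_mulVec, Matrix.smul_mulVec,
    Matrix.smul_mulVec, ← Matrix.mulVec_mulVec, tymρ_mulVec n i h1 (by omega) hn,
    tymρ_mulVec n (i+1) (by omega) h2 hn, smul_vNat, smul_vNat]
  rfl

lemma comm_col_i_mulVec (n i j : ℕ) (hij : j ≠ i + 1) (h1 : 1 ≤ j) (h2 : j ≤ n - 1)
    (hn : 2 ≤ n) (F : ℕ → Rtz) :
    alexBlock n i j i *ᵥ vNat n F = vNat n (fun p => F p - zv * rhoF j F p) := by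
  have hb : alexBlock n i j i = 1 - zv • tymρ n j := by
    unfold alexBlock; rw [if_neg hij, if_pos rfl]
  rw [hb, Matrix.sub_mulVec, Matrix.one_mulVec, Matrix.smul_mulVec,
    tymρ_mulVec n j h1 h2 hn, smul_vNat]
  rfl

lemma comm_col_j_mulVec (n i j : ℕ) (hij : j ≠ i + 1) (hij2 : i < j) (h1 : 1 ≤ i)
    (h2 : i ≤ n - 1) (hn : 2 ≤ n) (F : ℕ → Rtz) :
    alexBlock n i j j *ᵥ vNat n F = vNat n (fun p => zv * rhoF i F p - F p) := by
  have hb : alexBlock n i j j = zv • tymρ n i - 1 := by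
    unfold alexBlock; rw [if_neg hij, if_neg (by omega), if_pos rfl]
  rw [hb, Matrix.sub_mulVec, Matrix.one_mulVec, Matrix.smul_mulVec,
    tymρ_mulVec n i h1 h2 hn, smul_vNat]
  rfl

lemma alexBlock_eq_zero (n i j c : ℕ) (hci : c ≠ i) (hcj : c ≠ j) : alexBlock n i j c = 0 := by
  unfold alexBlock
  split_ifs <;> first | rfl | (exfalso; omega)

private lemma sum_two {α M : Type*} [Fintype α] [DecidableEq α] [AddCommMonoid M]
    (f : α → M) (a b : α) (hab : a ≠ b) (h : ∀ x, x ≠ a → x ≠ b → f x = 0) :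
    ∑ x, f x = f a + f b := by
  classical
  have h2 : ∑ x ∈ ({a, b} : Finset α), f x = ∑ x, f x := by
    refine Finset.sum_subset (Finset.subset_univ _) ?_
    intro x _ hx
    simp only [Finset.mem_insert, Finset.mem_singleton] at hx
    push_neg at hx
    exact h x hx.1 hx.2
  rw [← h2, Finset.sum_pair hab]

lemma sum_reduce (n : ℕ) (hn : 4 ≤ n) (i j : Fin (n - 1)) (hij : i < j) (p : Fin n)
    (hi : (i : ℕ) < n - 2) (w : Fin (n - 2) × Fin n → Rtz) :
    ∑ c : Fin (n - 2) × Fin n, alexM n (⟨⟨i, j⟩, hij⟩, p) c * w c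
      = (alexBlock n ((i : ℕ) + 1) ((j : ℕ) + 1) ((i : ℕ) + 1) *ᵥ fun q => w (⟨(i : ℕ), hi⟩, q)) p
        + (if h : (j : ℕ) < n - 2 then
            (alexBlock n ((i : ℕ) + 1) ((j : ℕ) + 1) ((j : ℕ) + 1) *ᵥ
              fun q => w (⟨(j : ℕ), h⟩, q)) p
          else 0) := by
  have hij' : (i : ℕ) < (j : ℕ) := hij
  rw [Fintype.sum_prod_type]
  have hterm : ∀ b : Fin (n - 2),
      ∑ q, alexM n (⟨⟨i, j⟩, hij⟩, p) (b, q) * w (b, q)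
        = (alexBlock n ((i : ℕ) + 1) ((j : ℕ) + 1) ((b : ℕ) + 1) *ᵥ fun q => w (b, q)) p :=
    fun b => rfl
  by_cases hj : (j : ℕ) < n - 2
  · rw [dif_pos hj]
    rw [sum_two _ (⟨(i : ℕ), hi⟩ : Fin (n - 2)) (⟨(j : ℕ), hj⟩ : Fin (n - 2))
        (by simp [Fin.ext_iff]; omega) ?_]
    · rw [hterm, hterm]
    · intro b hbi hbj
      rw [hterm b, alexBlock_eq_zero n _ _ _ ?_ ?_, Matrix.zero_mulVec, Pi.zero_apply]
      · simp only [Ne, Fin.ext_iff] at hbi; omega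
      · simp only [Ne, Fin.ext_iff] at hbj; omega
  · rw [dif_neg hj, add_zero]
    rw [Finset.sum_eq_single (⟨(i : ℕ), hi⟩ : Fin (n - 2))]
    · exact hterm _
    · intro b _ hbi
      rw [hterm b, alexBlock_eq_zero n _ _ _ ?_ ?_, Matrix.zero_mulVec, Pi.zero_apply]
      · simp only [Ne, Fin.ext_iff] at hbi; omega
      · have := b.isLt; omega
    · intro h; exact absurd (Finset.mem_univ _) h

noncomputable def wker (n : ℕ) (κ : Fin (n - 2)) : Fin (n - 2) × Fin n → Rtz := fun c =>
  if (c.1 : ℕ) = (κ : ℕ) ∧ (c.2 : ℕ) = (κ : ℕ) then 1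
  else if (c.1 : ℕ) = (κ : ℕ) ∧ (c.2 : ℕ) = (κ : ℕ) + 1 then -tv
  else if (c.1 : ℕ) < (κ : ℕ) ∧ (c.2 : ℕ) = (c.1 : ℕ) + 1 then 1 - tv
  else 0

lemma wker_hi (n : ℕ) (κ : Fin (n - 2)) (b : Fin (n - 2)) (h : (κ : ℕ) < (b : ℕ)) :
    (fun q : Fin n => wker n κ (b, q)) = 0 := by
  funext q; simp only [wker, Pi.zero_apply]
  split_ifs <;> first | rfl | (exfalso; omega)

lemma wker_eq (n : ℕ) (κ : Fin (n - 2)) (b : Fin (n - 2)) (h : (b : ℕ) = (κ : ℕ)) :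
    (fun q : Fin n => wker n κ (b, q))
      = vNat n (fun x => if x = (κ : ℕ) then 1 else if x = (κ : ℕ) + 1 then -tv else 0) := by
  funext q; simp only [wker, vNat]
  split_ifs <;> first | rfl | (exfalso; omega)

lemma wker_lo (n : ℕ) (κ : Fin (n - 2)) (b : Fin (n - 2)) (h : (b : ℕ) < (κ : ℕ)) :
    (fun q : Fin n => wker n κ (b, q))
      = vNat n (fun x => if x = (b : ℕ) + 1 then 1 - tv else 0) := by
  funext q; simp only [wker, vNat]
  split_ifs <;> first | rfl | (exfalso; omega)


lemma npp (x : ℕ) : x + 1 + 1 = x + 2 := rfl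
lemma neq1 (x a b : ℕ) : (x + a = x + b) ↔ (a = b) := by omega
lemma neq2 (x a : ℕ) : (x + a = x) ↔ (a = 0) := by omega
lemma neq3 (x a : ℕ) : (x = x + a) ↔ (a = 0) := by omega

noncomputable def FA (k : ℕ) : ℕ → Rtz := fun x => if x = k then 1 else if x = k + 1 then -tv else 0
noncomputable def FL (m : ℕ) : ℕ → Rtz := fun x => if x = m + 1 then 1 - tv else 0

lemma case_i_braid (a P : ℕ) :
    (1 - zv) ∣ (FA a) P - zv * rhoF (a + 1 + 1) (FA a) P
      + zv ^ 2 * rhoF (a + 1) (rhoF (a + 1 + 1) (FA a)) P := by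
  refine ⟨if P = a then 1 else if P = a + 1 then -tv * (1 + zv)
    else if P = a + 2 then tv ^ 2 * zv else 0, ?_⟩
  simp only [FA, rhoF, npp, Nat.add_sub_cancel, neq1, neq2, neq3]
  norm_num
  split_ifs <;> (first | (exfalso; omega) | ring1)

lemma case_i_comm (a b P : ℕ) (h2 : a < b) (h3 : b ≠ a + 1) :
    (1 - zv) ∣ (FA a) P - zv * rhoF (b + 1) (FA a) P := by
  refine ⟨if P = a then 1 else if P = a + 1 then -tv else 0, ?_⟩
  simp only [FA, rhoF, npp, Nat.add_sub_cancel, neq1, neq2, neq3,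
    (show ¬(b + 1 = a) from by omega), (show ¬(b + 1 = a + 1) from by omega),
    (show ¬(b = a) from by omega), (show ¬(b = a + 1) from by omega)]
  norm_num
  split_ifs <;> (first | (exfalso; omega) | ring1)

lemma case_lo_braid_far (a P : ℕ) :
    (1 - zv) ∣ ((FL a) P - zv * rhoF (a + 1 + 1) (FL a) P
        + zv ^ 2 * rhoF (a + 1) (rhoF (a + 1 + 1) (FL a)) P)
      + (zv * rhoF (a + 1) (FL (a + 1)) P
        - zv ^ 2 * rhoF (a + 1 + 1) (rhoF (a + 1) (FL (a + 1))) P - (FL (a + 1)) P) := by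
  refine ⟨if P = a + 1 then (1 - tv) * (1 + zv)
    else if P = a + 2 then (tv - 1) * (tv * zv + 1) else 0, ?_⟩
  simp only [FL, rhoF, npp, Nat.add_sub_cancel, neq1, neq2, neq3]
  norm_num
  split_ifs <;> (first | (exfalso; omega) | ring1)

lemma case_lo_braid_adj (a P : ℕ) :
    (1 - zv) ∣ ((FL a) P - zv * rhoF (a + 1 + 1) (FL a) P
        + zv ^ 2 * rhoF (a + 1) (rhoF (a + 1 + 1) (FL a)) P)
      + (zv * rhoF (a + 1) (FA (a + 1)) P
        - zv ^ 2 * rhoF (a + 1 + 1) (rhoF (a + 1) (FA (a + 1))) P - (FA (a + 1)) P) := by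
  refine ⟨if P = a then zv else if P = a + 1 then -tv * (1 + zv)
    else if P = a + 2 then tv * (1 - zv + tv * zv) else 0, ?_⟩
  simp only [FA, FL, rhoF, npp, Nat.add_sub_cancel, neq1, neq2, neq3]
  norm_num
  split_ifs <;> (first | (exfalso; omega) | ring1)

lemma case_lo_comm_far (a b P : ℕ) (h2 : a < b) (h3 : b ≠ a + 1) :
    (1 - zv) ∣ (FL a) P - zv * rhoF (b + 1) (FL a) P := by
  refine ⟨if P = a + 1 then 1 - tv else 0, ?_⟩
  simp only [FL, rhoF, npp, Nat.add_sub_cancel, neq1, neq2, neq3,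
    (show ¬(b + 1 = a + 1) from by omega), (show ¬(b = a + 1) from by omega)]
  norm_num
  split_ifs <;> (first | (exfalso; omega) | ring1)

lemma case_lo_comm_eq (a b P : ℕ) (h3 : b ≠ a + 1) (h2 : a < b) :
    (1 - zv) ∣ ((FL a) P - zv * rhoF (b + 1) (FL a) P)
      + (zv * rhoF (a + 1) (FA b) P - (FA b) P) := by
  refine ⟨if P = a + 1 then 1 - tv else if P = b then -1
    else if P = b + 1 then tv else 0, ?_⟩
  simp only [FA, FL, rhoF, npp, Nat.add_sub_cancel, neq1, neq2, neq3,
    (show ¬(b + 1 = a + 1) from by omega), (show ¬(b = a + 1) from by omega),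
    (show ¬(a + 1 = b) from by omega), (show ¬(a + 1 = b + 1) from by omega),
    (show ¬(a = b) from by omega), (show ¬(a = b + 1) from by omega)]
  norm_num
  split_ifs <;> (first | (exfalso; omega) | ring1)

lemma case_lo_comm_lo (a b P : ℕ) (h3 : b ≠ a + 1) (h2 : a < b) :
    (1 - zv) ∣ ((FL a) P - zv * rhoF (b + 1) (FL a) P)
      + (zv * rhoF (a + 1) (FL b) P - (FL b) P) := by
  refine ⟨if P = a + 1 then 1 - tv else if P = b + 1 then tv - 1 else 0, ?_⟩
  simp only [FL, rhoF, npp, Nat.add_sub_cancel, neq1, neq2, neq3,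
    (show ¬(b + 1 = a + 1) from by omega), (show ¬(b = a + 1) from by omega),
    (show ¬(a + 1 = b + 1) from by omega), (show ¬(a = b + 1) from by omega),
    (show ¬(a + 1 = b) from by omega), (show ¬(a = b) from by omega)]
  norm_num
  split_ifs <;> (first | (exfalso; omega) | ring1)

lemma ker_dvd (n : ℕ) (hn : 4 ≤ n) (κ : Fin (n - 2)) (row : AlexRow n) :
    (1 - zv) ∣ ∑ c, alexM n row c * wker n κ c := by
  obtain ⟨⟨⟨i, j⟩, hij⟩, p⟩ := row
  have hij' : (i : ℕ) < (j : ℕ) := hij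
  have hj1 : (j : ℕ) < n - 1 := j.isLt
  have hi : (i : ℕ) < n - 2 := by omega
  have hk : (κ : ℕ) < n - 2 := κ.isLt
  have hn2 : 2 ≤ n := by omega
  rw [sum_reduce n hn i j hij p hi]
  rcases lt_trichotomy ((κ : ℕ)) ((i : ℕ)) with hak | hak | hak
  · rw [wker_hi n κ ⟨(i : ℕ), hi⟩ (by show (κ:ℕ) < (i:ℕ); omega), Matrix.mulVec_zero,
      Pi.zero_apply, zero_add]
    by_cases hj2 : (j : ℕ) < n - 2
    · rw [dif_pos hj2, wker_hi n κ ⟨(j : ℕ), hj2⟩ (by show (κ:ℕ) < (j:ℕ); omega),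
        Matrix.mulVec_zero, Pi.zero_apply]
      exact dvd_zero _
    · rw [dif_neg hj2]; exact dvd_zero _
  · -- i = κ
    have hz : (1 - zv) ∣ (alexBlock n ((i : ℕ) + 1) ((j : ℕ) + 1) ((i : ℕ) + 1) *ᵥ
        fun q => wker n κ (⟨(i : ℕ), hi⟩, q)) p := by
      rw [wker_eq n κ ⟨(i : ℕ), hi⟩ (by show (i:ℕ) = (κ:ℕ); omega), hak]
      by_cases hbr : (j : ℕ) = (i : ℕ) + 1
      · rw [hbr, braid_col_i_mulVec n ((i : ℕ) + 1) (by omega) (by omega) hn2]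
        exact case_i_braid (i : ℕ) (p : ℕ)
      · rw [comm_col_i_mulVec n ((i : ℕ) + 1) ((j : ℕ) + 1) (by omega) (by omega) (by omega) hn2]
        exact case_i_comm (i : ℕ) (j : ℕ) (p : ℕ) hij' hbr
    by_cases hj2 : (j : ℕ) < n - 2
    · rw [dif_pos hj2, wker_hi n κ ⟨(j : ℕ), hj2⟩ (by show (κ:ℕ) < (j:ℕ); omega),
        Matrix.mulVec_zero, Pi.zero_apply, add_zero]
      exact hz
    · rw [dif_neg hj2, add_zero]; exact hz
  · -- i < κ
    rw [wker_lo n κ ⟨(i : ℕ), hi⟩ (by show (i:ℕ) < (κ:ℕ); omega)]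
    by_cases hbr : (j : ℕ) = (i : ℕ) + 1
    · rcases lt_or_eq_of_le (by omega : (i : ℕ) + 1 ≤ (κ : ℕ)) with hik2 | hik2
      · have hj2 : (j : ℕ) < n - 2 := by omega
        rw [dif_pos hj2, wker_lo n κ ⟨(j : ℕ), hj2⟩ (by show (j:ℕ) < (κ:ℕ); omega)]
        rw [hbr, braid_col_i_mulVec n ((i : ℕ) + 1) (by omega) (by omega) hn2,
          braid_col_j_mulVec n ((i : ℕ) + 1) (by omega) (by omega) hn2]
        exact case_lo_braid_far (i : ℕ) (p : ℕ)
      · have hj2 : (j : ℕ) < n - 2 := by omega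
        rw [dif_pos hj2, wker_eq n κ ⟨(j : ℕ), hj2⟩ (by show (j:ℕ) = (κ:ℕ); omega), ← hik2]
        rw [hbr, braid_col_i_mulVec n ((i : ℕ) + 1) (by omega) (by omega) hn2,
          braid_col_j_mulVec n ((i : ℕ) + 1) (by omega) (by omega) hn2]
        exact case_lo_braid_adj (i : ℕ) (p : ℕ)
    · rcases lt_trichotomy ((κ : ℕ)) ((j : ℕ)) with hbk | hbk | hbk
      · have hz : (1 - zv) ∣ (alexBlock n ((i : ℕ) + 1) ((j : ℕ) + 1) ((i : ℕ) + 1) *ᵥ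
            vNat n (fun x => if x = (i : ℕ) + 1 then 1 - tv else 0)) p := by
          rw [comm_col_i_mulVec n ((i : ℕ) + 1) ((j : ℕ) + 1) (by omega) (by omega) (by omega) hn2]
          exact case_lo_comm_far (i : ℕ) (j : ℕ) (p : ℕ) hij' hbr
        by_cases hj2 : (j : ℕ) < n - 2
        · rw [dif_pos hj2, wker_hi n κ ⟨(j : ℕ), hj2⟩ (by show (κ:ℕ) < (j:ℕ); omega),
            Matrix.mulVec_zero, Pi.zero_apply, add_zero]
          exact hz
        · rw [dif_neg hj2, add_zero]; exact hz
      · have hj2 : (j : ℕ) < n - 2 := by omega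
        rw [dif_pos hj2, wker_eq n κ ⟨(j : ℕ), hj2⟩ (by show (j:ℕ) = (κ:ℕ); omega), hbk,
          comm_col_i_mulVec n ((i : ℕ) + 1) ((j : ℕ) + 1) (by omega) (by omega) (by omega) hn2,
          comm_col_j_mulVec n ((i : ℕ) + 1) ((j : ℕ) + 1) (by omega) (by omega) (by omega)
            (by omega) hn2]
        exact case_lo_comm_eq (i : ℕ) (j : ℕ) (p : ℕ) hbr hij'
      · have hj2 : (j : ℕ) < n - 2 := by omega
        rw [dif_pos hj2, wker_lo n κ ⟨(j : ℕ), hj2⟩ (by show (j:ℕ) < (κ:ℕ); omega),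
          comm_col_i_mulVec n ((i : ℕ) + 1) ((j : ℕ) + 1) (by omega) (by omega) (by omega) hn2,
          comm_col_j_mulVec n ((i : ℕ) + 1) ((j : ℕ) + 1) (by omega) (by omega) (by omega)
            (by omega) hn2]
        exact case_lo_comm_lo (i : ℕ) (j : ℕ) (p : ℕ) hbr hij'

noncomputable def wq (n : ℕ) : Fin (n - 2) × Fin n → Rtz := fun c =>
  if (c.1 : ℕ) + 1 ≤ n - 3 then
    (if (c.2 : ℕ) = n - 2 then 1 - zv else if (c.2 : ℕ) = n - 1 then tv * zv * (1 - zv) else 0)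
  else
    (if (c.2 : ℕ) = n - 3 then -zv else if (c.2 : ℕ) = n - 2 then 1
     else if (c.2 : ℕ) = n - 1 then tv * zv * (1 - zv) else 0)

noncomputable def GQ (n : ℕ) : ℕ → Rtz :=
  fun x => if x = n - 2 then 1 - zv else if x = n - 1 then tv * zv * (1 - zv) else 0

noncomputable def FQ (n : ℕ) : ℕ → Rtz :=
  fun x => if x = n - 3 then -zv else if x = n - 2 then 1
    else if x = n - 1 then tv * zv * (1 - zv) else 0

lemma wq_lo (n : ℕ) (b : Fin (n - 2)) (h : (b : ℕ) + 1 ≤ n - 3) :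
    (fun q : Fin n => wq n (b, q)) = vNat n (GQ n) := by
  funext q; simp only [wq, vNat, GQ]
  rw [if_pos h]

lemma wq_top (n : ℕ) (b : Fin (n - 2)) (h : ¬((b : ℕ) + 1 ≤ n - 3)) :
    (fun q : Fin n => wq n (b, q)) = vNat n (FQ n) := by
  funext q; simp only [wq, vNat, FQ]
  rw [if_neg h]

lemma caseQ1 (n a P : ℕ) (hn : 4 ≤ n) (ha : a + 5 ≤ n) :
    (1 - tv * zv ^ 2) ∣ ((GQ n) P - zv * rhoF (a + 1 + 1) (GQ n) P
        + zv ^ 2 * rhoF (a + 1) (rhoF (a + 1 + 1) (GQ n)) P)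
      + (zv * rhoF (a + 1) (GQ n) P
        - zv ^ 2 * rhoF (a + 1 + 1) (rhoF (a + 1) (GQ n)) P - (GQ n) P) := by
  refine ⟨0, ?_⟩
  simp only [GQ, rhoF, npp, Nat.add_sub_cancel,
    (show ¬(a + 2 = n - 2) from by omega), (show ¬(a + 2 = n - 1) from by omega),
    (show ¬(a + 1 = n - 2) from by omega), (show ¬(a + 1 = n - 1) from by omega),
    (show ¬(a = n - 2) from by omega), (show ¬(a = n - 1) from by omega)]
  norm_num
  split_ifs <;> (first | (exfalso; omega) | ring1)

lemma caseQ2 (n a P : ℕ) (hn : 4 ≤ n) (ha : a + 4 = n) :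
    (1 - tv * zv ^ 2) ∣ ((GQ n) P - zv * rhoF (a + 1 + 1) (GQ n) P
        + zv ^ 2 * rhoF (a + 1) (rhoF (a + 1 + 1) (GQ n)) P)
      + (zv * rhoF (a + 1) (FQ n) P
        - zv ^ 2 * rhoF (a + 1 + 1) (rhoF (a + 1) (FQ n)) P - (FQ n) P) := by
  subst ha
  refine ⟨0, ?_⟩
  have e1 : a + 4 - 2 = a + 2 := by omega
  have e2 : a + 4 - 3 = a + 1 := by omega
  have e3 : a + 4 - 1 = a + 3 := by omega
  simp only [GQ, FQ, rhoF, npp, Nat.add_sub_cancel, e1, e2, e3, neq1, neq2, neq3]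
  norm_num
  split_ifs <;> (first | (exfalso; omega) | ring1)

lemma caseQ3 (n P : ℕ) (hn : 4 ≤ n) :
    (1 - tv * zv ^ 2) ∣ (FQ n) P - zv * rhoF (n - 3 + 1 + 1) (FQ n) P
      + zv ^ 2 * rhoF (n - 3 + 1) (rhoF (n - 3 + 1 + 1) (FQ n)) P := by
  refine ⟨if P = n - 3 then zv ^ 2 - zv else if P = n - 2 then 1 else 0, ?_⟩
  simp only [FQ, rhoF, npp, Nat.add_sub_cancel,
    (show n - 3 + 1 = n - 2 from by omega), (show n - 3 + 2 = n - 1 from by omega),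
    (show ¬(n - 2 = n - 3) from by omega), (show ¬(n - 2 = n - 1) from by omega),
    (show ¬(n - 1 = n - 3) from by omega), (show ¬(n - 1 = n - 2) from by omega),
    (show ¬(n - 3 = n - 2) from by omega), (show ¬(n - 3 = n - 1) from by omega)]
  norm_num
  split_ifs <;> (first | (exfalso; omega) | ring1)

lemma caseQ4 (n a b P : ℕ) (hn : 4 ≤ n) (hb : b + 4 ≤ n) (ha : a < b) (h3 : b ≠ a + 1) :
    (1 - tv * zv ^ 2) ∣ ((GQ n) P - zv * rhoF (b + 1) (GQ n) P)
      + (zv * rhoF (a + 1) (GQ n) P - (GQ n) P) := by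
  refine ⟨0, ?_⟩
  simp only [GQ, rhoF, npp, Nat.add_sub_cancel,
    (show ¬(b + 1 = n - 2) from by omega), (show ¬(b + 1 = n - 1) from by omega),
    (show ¬(b = n - 2) from by omega), (show ¬(b = n - 1) from by omega),
    (show ¬(a + 1 = n - 2) from by omega), (show ¬(a + 1 = n - 1) from by omega),
    (show ¬(a = n - 2) from by omega), (show ¬(a = n - 1) from by omega)]
  norm_num
  split_ifs <;> (first | (exfalso; omega) | ring1)

lemma caseQ5 (n a P : ℕ) (hn : 4 ≤ n) (ha : a + 5 ≤ n) :
    (1 - tv * zv ^ 2) ∣ ((GQ n) P - zv * rhoF (n - 3 + 1) (GQ n) P)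
      + (zv * rhoF (a + 1) (FQ n) P - (FQ n) P) := by
  refine ⟨0, ?_⟩
  simp only [GQ, FQ, rhoF, npp, Nat.add_sub_cancel,
    (show n - 3 + 1 = n - 2 from by omega),
    (show ¬(n - 2 = n - 3) from by omega), (show ¬(n - 2 = n - 1) from by omega),
    (show ¬(n - 3 = n - 2) from by omega), (show ¬(n - 3 = n - 1) from by omega),
    (show ¬(a + 1 = n - 3) from by omega), (show ¬(a + 1 = n - 2) from by omega),
    (show ¬(a + 1 = n - 1) from by omega), (show ¬(a = n - 3) from by omega),
    (show ¬(a = n - 2) from by omega), (show ¬(a = n - 1) from by omega)]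
  norm_num
  split_ifs <;> (first | (exfalso; omega) | ring1)

lemma caseQ6 (n a P : ℕ) (hn : 4 ≤ n) (ha : a + 4 ≤ n) :
    (1 - tv * zv ^ 2) ∣ (GQ n) P - zv * rhoF (n - 2 + 1) (GQ n) P := by
  refine ⟨if P = n - 2 then 1 - zv else 0, ?_⟩
  simp only [GQ, rhoF, npp, Nat.add_sub_cancel,
    (show n - 2 + 1 = n - 1 from by omega),
    (show ¬(n - 1 = n - 2) from by omega), (show ¬(n - 2 = n - 1) from by omega)]
  norm_num
  split_ifs <;> (first | (exfalso; omega) | ring1)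

lemma q_dvd (n : ℕ) (hn : 4 ≤ n) (row : AlexRow n) :
    (1 - tv * zv ^ 2) ∣ ∑ c, alexM n row c * wq n c := by
  obtain ⟨⟨⟨i, j⟩, hij⟩, p⟩ := row
  have hij' : (i : ℕ) < (j : ℕ) := hij
  have hj1 : (j : ℕ) < n - 1 := j.isLt
  have hi : (i : ℕ) < n - 2 := by omega
  have hn2 : 2 ≤ n := by omega
  rw [sum_reduce n hn i j hij p hi]
  by_cases hbr : (j : ℕ) = (i : ℕ) + 1
  · -- braid
    rcases (by omega : (i : ℕ) + 5 ≤ n ∨ (i : ℕ) + 4 = n ∨ (i : ℕ) + 3 = n) with h1 | h1 | h1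
    · have hj2 : (j : ℕ) < n - 2 := by omega
      rw [dif_pos hj2, wq_lo n ⟨(i : ℕ), hi⟩ (by show (i:ℕ) + 1 ≤ n - 3; omega),
        wq_lo n ⟨(j : ℕ), hj2⟩ (by show (j:ℕ) + 1 ≤ n - 3; omega),
        hbr, braid_col_i_mulVec n ((i : ℕ) + 1) (by omega) (by omega) hn2,
        braid_col_j_mulVec n ((i : ℕ) + 1) (by omega) (by omega) hn2]
      exact caseQ1 n (i : ℕ) (p : ℕ) hn h1
    · have hj2 : (j : ℕ) < n - 2 := by omega
      rw [dif_pos hj2, wq_lo n ⟨(i : ℕ), hi⟩ (by show (i:ℕ) + 1 ≤ n - 3; omega),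
        wq_top n ⟨(j : ℕ), hj2⟩ (by show ¬((j:ℕ) + 1 ≤ n - 3); omega),
        hbr, braid_col_i_mulVec n ((i : ℕ) + 1) (by omega) (by omega) hn2,
        braid_col_j_mulVec n ((i : ℕ) + 1) (by omega) (by omega) hn2]
      exact caseQ2 n (i : ℕ) (p : ℕ) hn h1
    · have hj2 : ¬((j : ℕ) < n - 2) := by omega
      rw [dif_neg hj2, add_zero, wq_top n ⟨(i : ℕ), hi⟩ (by show ¬((i:ℕ) + 1 ≤ n - 3); omega),
        hbr, show (i : ℕ) = n - 3 from by omega,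
        braid_col_i_mulVec n (n - 3 + 1) (by omega) (by omega) hn2]
      exact caseQ3 n (p : ℕ) hn
  · -- commutation
    rcases (by omega : (j : ℕ) + 4 ≤ n ∨ (j : ℕ) + 3 = n ∨ (j : ℕ) + 2 = n) with h1 | h1 | h1
    · have hj2 : (j : ℕ) < n - 2 := by omega
      rw [dif_pos hj2, wq_lo n ⟨(i : ℕ), hi⟩ (by show (i:ℕ) + 1 ≤ n - 3; omega),
        wq_lo n ⟨(j : ℕ), hj2⟩ (by show (j:ℕ) + 1 ≤ n - 3; omega),
        comm_col_i_mulVec n ((i : ℕ) + 1) ((j : ℕ) + 1) (by omega) (by omega) (by omega) hn2,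
        comm_col_j_mulVec n ((i : ℕ) + 1) ((j : ℕ) + 1) (by omega) (by omega) (by omega)
          (by omega) hn2]
      exact caseQ4 n (i : ℕ) (j : ℕ) (p : ℕ) hn h1 hij' hbr
    · have hj2 : (j : ℕ) < n - 2 := by omega
      rw [dif_pos hj2, wq_lo n ⟨(i : ℕ), hi⟩ (by show (i:ℕ) + 1 ≤ n - 3; omega),
        wq_top n ⟨(j : ℕ), hj2⟩ (by show ¬((j:ℕ) + 1 ≤ n - 3); omega),
        comm_col_i_mulVec n ((i : ℕ) + 1) ((j : ℕ) + 1) (by omega) (by omega) (by omega) hn2,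
        comm_col_j_mulVec n ((i : ℕ) + 1) ((j : ℕ) + 1) (by omega) (by omega) (by omega)
          (by omega) hn2, show (j : ℕ) = n - 3 from by omega]
      exact caseQ5 n (i : ℕ) (p : ℕ) hn (by omega)
    · have hj2 : ¬((j : ℕ) < n - 2) := by omega
      rw [dif_neg hj2, add_zero, wq_lo n ⟨(i : ℕ), hi⟩ (by show (i:ℕ) + 1 ≤ n - 3; omega),
        comm_col_i_mulVec n ((i : ℕ) + 1) ((j : ℕ) + 1) (by omega) (by omega) (by omega) hn2,
        show (j : ℕ) = n - 2 from by omega]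
      exact caseQ6 n (i : ℕ) (p : ℕ) hn (by omega)

lemma pow_dvd_det {m : Type*} [DecidableEq m] [Fintype m] (p : Rtz) :
    ∀ (l : List m) (B : Matrix m m Rtz) (w : m → m → Rtz), l.Nodup →
      (∀ j ∈ l, w j j = 1) →
      (∀ j ∈ l, ∀ j' ∈ l, j' ≠ j → w j j' = 0) →
      (∀ j ∈ l, ∀ r, p ∣ ∑ q, B r q * w j q) →
      p ^ l.length ∣ B.det := by
  intro l
  induction l with
  | nil => intro B w _ _ _ _; simpa using dvd_refl _
  | cons j l ih =>
    intro B w hnd h1 h0 hdvd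
    have hjl : j ∉ l := (List.nodup_cons.1 hnd).1
    have hd : ∀ r, ∃ c, ∑ q, B r q * w j q = p * c :=
      fun r => hdvd j (List.mem_cons_self) r
    choose u hu using hd
    have key : B.det = p * (B.updateCol j u).det := by
      have h2 := Matrix.det_updateCol_sum B j (w j)
      rw [h1 j (List.mem_cons_self), one_smul] at h2
      have h3 : (fun k => ∑ i, w j i • B k i) = fun r => p * u r := by
        funext r
        rw [← hu r]
        exact Finset.sum_congr rfl fun q _ => by rw [smul_eq_mul, mul_comm]
      rw [h3] at h2
      have h4 : (fun r => p * u r) = p • u := rfl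
      rw [h4, Matrix.det_updateCol_smul] at h2
      rw [← h2]
    have hdvd' : ∀ j' ∈ l, ∀ r, p ∣ ∑ q, (B.updateCol j u) r q * w j' q := by
      intro j' hj' r
      have hw0 : w j' j = 0 :=
        h0 j' (List.mem_cons_of_mem _ hj') j (List.mem_cons_self)
          (fun h => hjl (h ▸ hj'))
      have : ∑ q, (B.updateCol j u) r q * w j' q = ∑ q, B r q * w j' q := by
        refine Finset.sum_congr rfl fun q _ => ?_
        rcases eq_or_ne q j with rfl | hq
        · rw [hw0, mul_zero, mul_zero]
        · rw [Matrix.updateCol_ne hq]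
      rw [this]
      exact hdvd j' (List.mem_cons_of_mem _ hj') r
    obtain ⟨c, hc⟩ := ih (B.updateCol j u) w (List.nodup_cons.1 hnd).2
      (fun j' h => h1 j' (List.mem_cons_of_mem _ h))
      (fun j' h j'' h' => h0 j' (List.mem_cons_of_mem _ h) j'' (List.mem_cons_of_mem _ h'))
      hdvd'
    exact ⟨c, by rw [key, hc, List.length_cons, pow_succ]; ring⟩

lemma prime_q : Prime (1 - tv * zv ^ 2) := by
  classical
  set A := MvPolynomial (Fin 1) ℤ
  have ha : (-(MvPolynomial.X 0 ^ 2) : A) ≠ 0 :=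
    neg_ne_zero.2 (pow_ne_zero _ (MvPolynomial.X_ne_zero (0 : Fin 1)))
  have hdeg : (Polynomial.C (-(MvPolynomial.X 0 ^ 2) : A) * Polynomial.X
      + Polynomial.C 1).natDegree = 1 := Polynomial.natDegree_linear ha
  have hirr : Irreducible (Polynomial.C (-(MvPolynomial.X 0 ^ 2) : A) * Polynomial.X
      + Polynomial.C 1) := by
    constructor
    · intro hu
      have := Polynomial.natDegree_eq_zero_of_isUnit hu
      omega
    · intro f g hfg
      have hne : (Polynomial.C (-(MvPolynomial.X 0 ^ 2) : A) * Polynomial.X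
          + Polynomial.C 1) ≠ 0 := fun h => by rw [h] at hdeg; simp at hdeg
      have hf0 : f ≠ 0 := fun h => hne (by rw [hfg, h, zero_mul])
      have hg0 : g ≠ 0 := fun h => hne (by rw [hfg, h, mul_zero])
      have hsum : f.natDegree + g.natDegree = 1 := by
        rw [← Polynomial.natDegree_mul hf0 hg0, ← hfg, hdeg]
      have hcoe : f.coeff 0 * g.coeff 0 = 1 := by
        have := congrArg (fun p => Polynomial.coeff p 0) hfg
        simpa [Polynomial.mul_coeff_zero] using this.symm
      rcases (by omega : f.natDegree = 0 ∨ g.natDegree = 0) with h | h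
      · left
        rw [Polynomial.eq_C_of_natDegree_eq_zero h]
        exact Polynomial.isUnit_C.2 (IsUnit.of_mul_eq_one _ hcoe)
      · right
        rw [Polynomial.eq_C_of_natDegree_eq_zero h]
        exact Polynomial.isUnit_C.2 (IsUnit.of_mul_eq_one _ (by rw [mul_comm] at hcoe; exact hcoe))
  have hp : Prime (Polynomial.C (-(MvPolynomial.X 0 ^ 2) : A) * Polynomial.X
      + Polynomial.C 1) := (UniqueFactorizationMonoid.irreducible_iff_prime).1 hirr
  have himg : (MvPolynomial.finSuccEquiv ℤ 1) (1 - tv * zv ^ 2)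
      = Polynomial.C (-(MvPolynomial.X 0 ^ 2) : A) * Polynomial.X + Polynomial.C 1 := by
    have h1 : (1 : Fin 2) = (0 : Fin 1).succ := by decide
    rw [tv, zv, h1, map_sub, _root_.map_one, _root_.map_mul, _root_.map_pow,
      MvPolynomial.finSuccEquiv_X_zero, MvPolynomial.finSuccEquiv_X_succ,
      map_neg, map_pow, Polynomial.C_1]
    ring
  exact (MulEquiv.prime_iff (p := 1 - tv * zv ^ 2)
    (MvPolynomial.finSuccEquiv ℤ 1).toRingEquiv.toMulEquiv).1 (by rw [← himg] at hp; exact hp)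

lemma q_not_dvd_z : ¬ (1 - tv * zv ^ 2) ∣ (1 - zv) := by
  rintro ⟨c, hc⟩
  have := congrArg (MvPolynomial.eval (fun i : Fin 2 => if i = 0 then (1 : ℤ) else -1)) hc
  simp [tv, zv] at this

lemma wker_self (n : ℕ) (κ : Fin (n - 2)) (h : (κ : ℕ) < n) :
    wker n κ (κ, ⟨(κ : ℕ), h⟩) = 1 := by
  simp [wker]

lemma wker_other (n : ℕ) (κ κ' : Fin (n - 2)) (hne : κ' ≠ κ) (h2 : (κ' : ℕ) < n) :
    wker n κ (κ', ⟨(κ' : ℕ), h2⟩) = 0 := by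
  have hv : (κ' : ℕ) ≠ (κ : ℕ) := fun h => hne (Fin.ext h)
  simp only [wker]
  split_ifs <;> first | rfl | (exfalso; omega)

lemma wq_self (n : ℕ) (hn : 4 ≤ n) (h1 : n - 3 < n - 2) (h2 : n - 2 < n) :
    wq n ((⟨n - 3, h1⟩ : Fin (n - 2)), (⟨n - 2, h2⟩ : Fin n)) = 1 := by
  simp only [wq]
  split_ifs <;> first | rfl | (exfalso; omega)


/-- For `n ≥ 4`, the polynomial `(1-z)^{n-2}·(1-tz²)` divides every maximal minor of the
Alexander matrix `M_{n-1}` (i.e. the determinant of every square submatrix obtained by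
choosing `(n-2)·n` of its rows). -/
theorem common_divisor_of_maximal_minors (n : ℕ) (hn : 4 ≤ n) :
    ∀ f : Fin (n - 2) × Fin n → AlexRow n, Function.Injective f →
      (1 - zv) ^ (n - 2) * (1 - tv * zv ^ 2) ∣ ((alexM n).submatrix f id).det := by
  intro f _
  set B := (alexM n).submatrix f id with hB
  -- the (1-z)^(n-2) part
  have hcast : ∀ κ : Fin (n - 2), (κ : ℕ) < n := fun κ => by have := κ.isLt; omega
  set l : List (Fin (n - 2) × Fin n) :=
    (List.finRange (n - 2)).map (fun κ => (κ, ⟨(κ : ℕ), hcast κ⟩)) with hl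
  have hlen : l.length = n - 2 := by simp [hl]
  have hinj : Function.Injective (fun κ : Fin (n - 2) => ((κ, ⟨(κ : ℕ), hcast κ⟩) :
      Fin (n - 2) × Fin n)) := fun a b h => congrArg Prod.fst h
  have hnd : l.Nodup := (List.nodup_finRange _).map hinj
  have H1 : (1 - zv) ^ (n - 2) ∣ B.det := by
    have key := pow_dvd_det (1 - zv) l B (fun jj c => wker n jj.1 c) hnd ?_ ?_ ?_
    · rwa [hlen] at key
    · intro j hj
      obtain ⟨κ, _, rfl⟩ := List.mem_map.1 hj
      exact wker_self n κ (hcast κ)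
    · intro j hj j' hj' hne
      obtain ⟨κ, _, rfl⟩ := List.mem_map.1 hj
      obtain ⟨κ', _, rfl⟩ := List.mem_map.1 hj'
      have : κ' ≠ κ := fun h => hne (by subst h; rfl)
      exact wker_other n κ κ' this (hcast κ')
    · intro j hj r
      obtain ⟨κ, _, rfl⟩ := List.mem_map.1 hj
      exact ker_dvd n hn κ (f r)
  -- the (1 - t z^2) part
  have h1 : n - 3 < n - 2 := by omega
  have h2 : n - 2 < n := by omega
  have H2 : (1 - tv * zv ^ 2) ∣ B.det := by
    have := pow_dvd_det (1 - tv * zv ^ 2)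
      [((⟨n - 3, h1⟩ : Fin (n - 2)), (⟨n - 2, h2⟩ : Fin n))] B (fun _ c => wq n c)
      (List.nodup_singleton _) ?_ ?_ ?_
    · simpa using this
    · intro j hj
      rw [List.mem_singleton] at hj
      subst hj
      exact wq_self n hn h1 h2
    · intro j hj j' hj' hne
      rw [List.mem_singleton] at hj hj'
      exact absurd (hj'.trans hj.symm) hne
    · intro j hj r
      exact q_dvd n hn (f r)
  obtain ⟨E, hE⟩ := H1
  have hq : Prime (1 - tv * zv ^ 2) := prime_q
  have hqE : (1 - tv * zv ^ 2) ∣ E := by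
    rcases (hq.2.2 _ _ (hE ▸ H2)) with h | h
    · exact absurd (hq.dvd_of_dvd_pow h) q_not_dvd_z
    · exact h
  obtain ⟨E', hE'⟩ := hqE
  exact ⟨E', by rw [hE, hE']; ring⟩
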